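/- The infinite word x_5 contains a factor with exponent exactly 3/2; in fact there exist natural numbers i, n ≥ 1 and p ≥ 1 with 2n = 3p such that x_5[i+j] = x_5[i+j+p] for all j with 0 ≤ j < n − p (for example i = 23, n = 6, p = 4, giving the factor 403240). -/

import Mathlib

/-- The characteristic Sturmian word with slope `α = √2 - 1`, indexed from 1:
`c_α[n] = ⌊α(n+1)⌋ - ⌊αn⌋`. -/
noncomputable def calpha (n : ℕ) : ℤ :=
  ⌊(Real.sqrt 2 - 1) * ((n : ℝ) + 1)⌋ - ⌊(Real.sqrt 2 - 1) * (n : ℝ)⌋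

/-- `zcount m` = number of indices `1 ≤ j ≤ m` with `c_α[j] = 0`. -/
noncomputable def zcount (m : ℕ) : ℕ :=
  ((Finset.Icc 1 m).filter fun j => calpha j = 0).card

/-- `ocount m` = number of indices `1 ≤ j ≤ m` with `c_α[j] = 1`. -/
noncomputable def ocount (m : ℕ) : ℕ :=
  ((Finset.Icc 1 m).filter fun j => calpha j = 1).card

/-- The infinite balanced word `x₅` over `{0,1,2,3,4}`, indexed from 0, obtained from
`c_α` by replacing the 0's by `(0102)^ω` and the 1's by `(34)^ω`. -/
noncomputable def x5 (i : ℕ) : ℕ :=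
  if calpha (i + 1) = 0 then [0, 1, 0, 2].getD ((zcount (i + 1) - 1) % 4) 0
  else [3, 4].getD ((ocount (i + 1) - 1) % 2) 0


lemma sqrt2_lb : (1.4142:ℝ) < Real.sqrt 2 := by
  nlinarith [Real.sq_sqrt (by norm_num : (0:ℝ) ≤ 2), Real.sqrt_nonneg 2]

lemma sqrt2_ub : Real.sqrt 2 < 1.41422 := by
  nlinarith [Real.sq_sqrt (by norm_num : (0:ℝ) ≤ 2), Real.sqrt_nonneg 2]

lemma floor_an (n : ℕ) (k : ℤ) (h1 : (k:ℝ) ≤ 1.4142*n - n) (h2 : (1.41422:ℝ)*n - n < (k:ℝ)+1) :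
    ⌊(Real.sqrt 2 - 1) * (n:ℝ)⌋ = k := by
  have hl := sqrt2_lb
  have hu := sqrt2_ub
  have hn : (0:ℝ) ≤ (n:ℝ) := Nat.cast_nonneg n
  have h3 := mul_le_mul_of_nonneg_right hu.le hn
  have h4 := mul_le_mul_of_nonneg_right hl.le hn
  rw [Int.floor_eq_iff]
  constructor
  · nlinarith
  · nlinarith

lemma fl1 : ⌊(Real.sqrt 2 - 1) * ((1:ℕ):ℝ)⌋ = 0 := by
  apply floor_an <;> norm_num

lemma fl2 : ⌊(Real.sqrt 2 - 1) * ((2:ℕ):ℝ)⌋ = 0 := by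
  apply floor_an <;> norm_num

lemma fl3 : ⌊(Real.sqrt 2 - 1) * ((3:ℕ):ℝ)⌋ = 1 := by
  apply floor_an <;> norm_num

lemma fl4 : ⌊(Real.sqrt 2 - 1) * ((4:ℕ):ℝ)⌋ = 1 := by
  apply floor_an <;> norm_num

lemma fl5 : ⌊(Real.sqrt 2 - 1) * ((5:ℕ):ℝ)⌋ = 2 := by
  apply floor_an <;> norm_num

lemma fl6 : ⌊(Real.sqrt 2 - 1) * ((6:ℕ):ℝ)⌋ = 2 := by
  apply floor_an <;> norm_num

lemma fl7 : ⌊(Real.sqrt 2 - 1) * ((7:ℕ):ℝ)⌋ = 2 := by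
  apply floor_an <;> norm_num

lemma fl8 : ⌊(Real.sqrt 2 - 1) * ((8:ℕ):ℝ)⌋ = 3 := by
  apply floor_an <;> norm_num

lemma fl9 : ⌊(Real.sqrt 2 - 1) * ((9:ℕ):ℝ)⌋ = 3 := by
  apply floor_an <;> norm_num

lemma fl10 : ⌊(Real.sqrt 2 - 1) * ((10:ℕ):ℝ)⌋ = 4 := by
  apply floor_an <;> norm_num

lemma fl11 : ⌊(Real.sqrt 2 - 1) * ((11:ℕ):ℝ)⌋ = 4 := by
  apply floor_an <;> norm_num

lemma fl12 : ⌊(Real.sqrt 2 - 1) * ((12:ℕ):ℝ)⌋ = 4 := by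
  apply floor_an <;> norm_num

lemma fl13 : ⌊(Real.sqrt 2 - 1) * ((13:ℕ):ℝ)⌋ = 5 := by
  apply floor_an <;> norm_num

lemma fl14 : ⌊(Real.sqrt 2 - 1) * ((14:ℕ):ℝ)⌋ = 5 := by
  apply floor_an <;> norm_num

lemma fl15 : ⌊(Real.sqrt 2 - 1) * ((15:ℕ):ℝ)⌋ = 6 := by
  apply floor_an <;> norm_num

lemma fl16 : ⌊(Real.sqrt 2 - 1) * ((16:ℕ):ℝ)⌋ = 6 := by
  apply floor_an <;> norm_num

lemma fl17 : ⌊(Real.sqrt 2 - 1) * ((17:ℕ):ℝ)⌋ = 7 := by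
  apply floor_an <;> norm_num

lemma fl18 : ⌊(Real.sqrt 2 - 1) * ((18:ℕ):ℝ)⌋ = 7 := by
  apply floor_an <;> norm_num

lemma fl19 : ⌊(Real.sqrt 2 - 1) * ((19:ℕ):ℝ)⌋ = 7 := by
  apply floor_an <;> norm_num

lemma fl20 : ⌊(Real.sqrt 2 - 1) * ((20:ℕ):ℝ)⌋ = 8 := by
  apply floor_an <;> norm_num

lemma fl21 : ⌊(Real.sqrt 2 - 1) * ((21:ℕ):ℝ)⌋ = 8 := by
  apply floor_an <;> norm_num

lemma fl22 : ⌊(Real.sqrt 2 - 1) * ((22:ℕ):ℝ)⌋ = 9 := by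
  apply floor_an <;> norm_num

lemma fl23 : ⌊(Real.sqrt 2 - 1) * ((23:ℕ):ℝ)⌋ = 9 := by
  apply floor_an <;> norm_num

lemma fl24 : ⌊(Real.sqrt 2 - 1) * ((24:ℕ):ℝ)⌋ = 9 := by
  apply floor_an <;> norm_num

lemma fl25 : ⌊(Real.sqrt 2 - 1) * ((25:ℕ):ℝ)⌋ = 10 := by
  apply floor_an <;> norm_num

lemma fl26 : ⌊(Real.sqrt 2 - 1) * ((26:ℕ):ℝ)⌋ = 10 := by
  apply floor_an <;> norm_num

lemma fl27 : ⌊(Real.sqrt 2 - 1) * ((27:ℕ):ℝ)⌋ = 11 := by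
  apply floor_an <;> norm_num

lemma fl28 : ⌊(Real.sqrt 2 - 1) * ((28:ℕ):ℝ)⌋ = 11 := by
  apply floor_an <;> norm_num

lemma fl29 : ⌊(Real.sqrt 2 - 1) * ((29:ℕ):ℝ)⌋ = 12 := by
  apply floor_an <;> norm_num

lemma fl30 : ⌊(Real.sqrt 2 - 1) * ((30:ℕ):ℝ)⌋ = 12 := by
  apply floor_an <;> norm_num

lemma c1 : calpha 1 = 0 := by
  unfold calpha
  rw [show ((1:ℕ):ℝ) + 1 = ((2:ℕ):ℝ) by norm_num, fl2, fl1]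
  norm_num

lemma c2 : calpha 2 = 1 := by
  unfold calpha
  rw [show ((2:ℕ):ℝ) + 1 = ((3:ℕ):ℝ) by norm_num, fl3, fl2]
  norm_num

lemma c3 : calpha 3 = 0 := by
  unfold calpha
  rw [show ((3:ℕ):ℝ) + 1 = ((4:ℕ):ℝ) by norm_num, fl4, fl3]
  norm_num

lemma c4 : calpha 4 = 1 := by
  unfold calpha
  rw [show ((4:ℕ):ℝ) + 1 = ((5:ℕ):ℝ) by norm_num, fl5, fl4]
  norm_num

lemma c5 : calpha 5 = 0 := by
  unfold calpha
  rw [show ((5:ℕ):ℝ) + 1 = ((6:ℕ):ℝ) by norm_num, fl6, fl5]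
  norm_num

lemma c6 : calpha 6 = 0 := by
  unfold calpha
  rw [show ((6:ℕ):ℝ) + 1 = ((7:ℕ):ℝ) by norm_num, fl7, fl6]
  norm_num

lemma c7 : calpha 7 = 1 := by
  unfold calpha
  rw [show ((7:ℕ):ℝ) + 1 = ((8:ℕ):ℝ) by norm_num, fl8, fl7]
  norm_num

lemma c8 : calpha 8 = 0 := by
  unfold calpha
  rw [show ((8:ℕ):ℝ) + 1 = ((9:ℕ):ℝ) by norm_num, fl9, fl8]
  norm_num

lemma c9 : calpha 9 = 1 := by
  unfold calpha
  rw [show ((9:ℕ):ℝ) + 1 = ((10:ℕ):ℝ) by norm_num, fl10, fl9]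
  norm_num

lemma c10 : calpha 10 = 0 := by
  unfold calpha
  rw [show ((10:ℕ):ℝ) + 1 = ((11:ℕ):ℝ) by norm_num, fl11, fl10]
  norm_num

lemma c11 : calpha 11 = 0 := by
  unfold calpha
  rw [show ((11:ℕ):ℝ) + 1 = ((12:ℕ):ℝ) by norm_num, fl12, fl11]
  norm_num

lemma c12 : calpha 12 = 1 := by
  unfold calpha
  rw [show ((12:ℕ):ℝ) + 1 = ((13:ℕ):ℝ) by norm_num, fl13, fl12]
  norm_num

lemma c13 : calpha 13 = 0 := by
  unfold calpha
  rw [show ((13:ℕ):ℝ) + 1 = ((14:ℕ):ℝ) by norm_num, fl14, fl13]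
  norm_num

lemma c14 : calpha 14 = 1 := by
  unfold calpha
  rw [show ((14:ℕ):ℝ) + 1 = ((15:ℕ):ℝ) by norm_num, fl15, fl14]
  norm_num

lemma c15 : calpha 15 = 0 := by
  unfold calpha
  rw [show ((15:ℕ):ℝ) + 1 = ((16:ℕ):ℝ) by norm_num, fl16, fl15]
  norm_num

lemma c16 : calpha 16 = 1 := by
  unfold calpha
  rw [show ((16:ℕ):ℝ) + 1 = ((17:ℕ):ℝ) by norm_num, fl17, fl16]
  norm_num

lemma c17 : calpha 17 = 0 := by
  unfold calpha
  rw [show ((17:ℕ):ℝ) + 1 = ((18:ℕ):ℝ) by norm_num, fl18, fl17]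
  norm_num

lemma c18 : calpha 18 = 0 := by
  unfold calpha
  rw [show ((18:ℕ):ℝ) + 1 = ((19:ℕ):ℝ) by norm_num, fl19, fl18]
  norm_num

lemma c19 : calpha 19 = 1 := by
  unfold calpha
  rw [show ((19:ℕ):ℝ) + 1 = ((20:ℕ):ℝ) by norm_num, fl20, fl19]
  norm_num

lemma c20 : calpha 20 = 0 := by
  unfold calpha
  rw [show ((20:ℕ):ℝ) + 1 = ((21:ℕ):ℝ) by norm_num, fl21, fl20]
  norm_num

lemma c21 : calpha 21 = 1 := by
  unfold calpha
  rw [show ((21:ℕ):ℝ) + 1 = ((22:ℕ):ℝ) by norm_num, fl22, fl21]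
  norm_num

lemma c22 : calpha 22 = 0 := by
  unfold calpha
  rw [show ((22:ℕ):ℝ) + 1 = ((23:ℕ):ℝ) by norm_num, fl23, fl22]
  norm_num

lemma c23 : calpha 23 = 0 := by
  unfold calpha
  rw [show ((23:ℕ):ℝ) + 1 = ((24:ℕ):ℝ) by norm_num, fl24, fl23]
  norm_num

lemma c24 : calpha 24 = 1 := by
  unfold calpha
  rw [show ((24:ℕ):ℝ) + 1 = ((25:ℕ):ℝ) by norm_num, fl25, fl24]
  norm_num

lemma c25 : calpha 25 = 0 := by
  unfold calpha
  rw [show ((25:ℕ):ℝ) + 1 = ((26:ℕ):ℝ) by norm_num, fl26, fl25]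
  norm_num

lemma c26 : calpha 26 = 1 := by
  unfold calpha
  rw [show ((26:ℕ):ℝ) + 1 = ((27:ℕ):ℝ) by norm_num, fl27, fl26]
  norm_num

lemma c27 : calpha 27 = 0 := by
  unfold calpha
  rw [show ((27:ℕ):ℝ) + 1 = ((28:ℕ):ℝ) by norm_num, fl28, fl27]
  norm_num

lemma c28 : calpha 28 = 1 := by
  unfold calpha
  rw [show ((28:ℕ):ℝ) + 1 = ((29:ℕ):ℝ) by norm_num, fl29, fl28]
  norm_num

lemma c29 : calpha 29 = 0 := by
  unfold calpha
  rw [show ((29:ℕ):ℝ) + 1 = ((30:ℕ):ℝ) by norm_num, fl30, fl29]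
  norm_num



lemma icc_succ (m : ℕ) : Finset.Icc 1 (m+1) = insert (m+1) (Finset.Icc 1 m) := by
  rw [← Finset.Ico_insert_right (Nat.succ_le_succ (Nat.zero_le m))]
  exact congrArg (insert (m+1)) (Finset.Ico_add_one_right_eq_Icc (a := 1) (b := m))

lemma zcount_succ (m : ℕ) : zcount (m+1) = zcount m + if calpha (m+1) = 0 then 1 else 0 := by
  unfold zcount
  rw [icc_succ, Finset.filter_insert]
  split
  · rw [Finset.card_insert_of_notMem (by simp)]
  · simp

lemma ocount_succ (m : ℕ) : ocount (m+1) = ocount m + if calpha (m+1) = 1 then 1 else 0 := by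
  unfold ocount
  rw [icc_succ, Finset.filter_insert]
  split
  · rw [Finset.card_insert_of_notMem (by simp)]
  · simp

lemma z0 : zcount 0 = 0 := by unfold zcount; simp
lemma o0 : ocount 0 = 0 := by unfold ocount; simp

lemma z1 : zcount 1 = 1 := by
  rw [show (1:ℕ) = 0+1 from rfl, zcount_succ, c1, z0]
  norm_num
lemma o1 : ocount 1 = 0 := by
  rw [show (1:ℕ) = 0+1 from rfl, ocount_succ, c1, o0]
  norm_num

lemma z2 : zcount 2 = 1 := by
  rw [show (2:ℕ) = 1+1 from rfl, zcount_succ, c2, z1]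
  norm_num
lemma o2 : ocount 2 = 1 := by
  rw [show (2:ℕ) = 1+1 from rfl, ocount_succ, c2, o1]
  norm_num

lemma z3 : zcount 3 = 2 := by
  rw [show (3:ℕ) = 2+1 from rfl, zcount_succ, c3, z2]
  norm_num
lemma o3 : ocount 3 = 1 := by
  rw [show (3:ℕ) = 2+1 from rfl, ocount_succ, c3, o2]
  norm_num

lemma z4 : zcount 4 = 2 := by
  rw [show (4:ℕ) = 3+1 from rfl, zcount_succ, c4, z3]
  norm_num
lemma o4 : ocount 4 = 2 := by
  rw [show (4:ℕ) = 3+1 from rfl, ocount_succ, c4, o3]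
  norm_num

lemma z5 : zcount 5 = 3 := by
  rw [show (5:ℕ) = 4+1 from rfl, zcount_succ, c5, z4]
  norm_num
lemma o5 : ocount 5 = 2 := by
  rw [show (5:ℕ) = 4+1 from rfl, ocount_succ, c5, o4]
  norm_num

lemma z6 : zcount 6 = 4 := by
  rw [show (6:ℕ) = 5+1 from rfl, zcount_succ, c6, z5]
  norm_num
lemma o6 : ocount 6 = 2 := by
  rw [show (6:ℕ) = 5+1 from rfl, ocount_succ, c6, o5]
  norm_num

lemma z7 : zcount 7 = 4 := by
  rw [show (7:ℕ) = 6+1 from rfl, zcount_succ, c7, z6]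
  norm_num
lemma o7 : ocount 7 = 3 := by
  rw [show (7:ℕ) = 6+1 from rfl, ocount_succ, c7, o6]
  norm_num

lemma z8 : zcount 8 = 5 := by
  rw [show (8:ℕ) = 7+1 from rfl, zcount_succ, c8, z7]
  norm_num
lemma o8 : ocount 8 = 3 := by
  rw [show (8:ℕ) = 7+1 from rfl, ocount_succ, c8, o7]
  norm_num

lemma z9 : zcount 9 = 5 := by
  rw [show (9:ℕ) = 8+1 from rfl, zcount_succ, c9, z8]
  norm_num
lemma o9 : ocount 9 = 4 := by
  rw [show (9:ℕ) = 8+1 from rfl, ocount_succ, c9, o8]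
  norm_num

lemma z10 : zcount 10 = 6 := by
  rw [show (10:ℕ) = 9+1 from rfl, zcount_succ, c10, z9]
  norm_num
lemma o10 : ocount 10 = 4 := by
  rw [show (10:ℕ) = 9+1 from rfl, ocount_succ, c10, o9]
  norm_num

lemma z11 : zcount 11 = 7 := by
  rw [show (11:ℕ) = 10+1 from rfl, zcount_succ, c11, z10]
  norm_num
lemma o11 : ocount 11 = 4 := by
  rw [show (11:ℕ) = 10+1 from rfl, ocount_succ, c11, o10]
  norm_num

lemma z12 : zcount 12 = 7 := by
  rw [show (12:ℕ) = 11+1 from rfl, zcount_succ, c12, z11]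
  norm_num
lemma o12 : ocount 12 = 5 := by
  rw [show (12:ℕ) = 11+1 from rfl, ocount_succ, c12, o11]
  norm_num

lemma z13 : zcount 13 = 8 := by
  rw [show (13:ℕ) = 12+1 from rfl, zcount_succ, c13, z12]
  norm_num
lemma o13 : ocount 13 = 5 := by
  rw [show (13:ℕ) = 12+1 from rfl, ocount_succ, c13, o12]
  norm_num

lemma z14 : zcount 14 = 8 := by
  rw [show (14:ℕ) = 13+1 from rfl, zcount_succ, c14, z13]
  norm_num
lemma o14 : ocount 14 = 6 := by
  rw [show (14:ℕ) = 13+1 from rfl, ocount_succ, c14, o13]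
  norm_num

lemma z15 : zcount 15 = 9 := by
  rw [show (15:ℕ) = 14+1 from rfl, zcount_succ, c15, z14]
  norm_num
lemma o15 : ocount 15 = 6 := by
  rw [show (15:ℕ) = 14+1 from rfl, ocount_succ, c15, o14]
  norm_num

lemma z16 : zcount 16 = 9 := by
  rw [show (16:ℕ) = 15+1 from rfl, zcount_succ, c16, z15]
  norm_num
lemma o16 : ocount 16 = 7 := by
  rw [show (16:ℕ) = 15+1 from rfl, ocount_succ, c16, o15]
  norm_num

lemma z17 : zcount 17 = 10 := by
  rw [show (17:ℕ) = 16+1 from rfl, zcount_succ, c17, z16]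
  norm_num
lemma o17 : ocount 17 = 7 := by
  rw [show (17:ℕ) = 16+1 from rfl, ocount_succ, c17, o16]
  norm_num

lemma z18 : zcount 18 = 11 := by
  rw [show (18:ℕ) = 17+1 from rfl, zcount_succ, c18, z17]
  norm_num
lemma o18 : ocount 18 = 7 := by
  rw [show (18:ℕ) = 17+1 from rfl, ocount_succ, c18, o17]
  norm_num

lemma z19 : zcount 19 = 11 := by
  rw [show (19:ℕ) = 18+1 from rfl, zcount_succ, c19, z18]
  norm_num
lemma o19 : ocount 19 = 8 := by
  rw [show (19:ℕ) = 18+1 from rfl, ocount_succ, c19, o18]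
  norm_num

lemma z20 : zcount 20 = 12 := by
  rw [show (20:ℕ) = 19+1 from rfl, zcount_succ, c20, z19]
  norm_num
lemma o20 : ocount 20 = 8 := by
  rw [show (20:ℕ) = 19+1 from rfl, ocount_succ, c20, o19]
  norm_num

lemma z21 : zcount 21 = 12 := by
  rw [show (21:ℕ) = 20+1 from rfl, zcount_succ, c21, z20]
  norm_num
lemma o21 : ocount 21 = 9 := by
  rw [show (21:ℕ) = 20+1 from rfl, ocount_succ, c21, o20]
  norm_num

lemma z22 : zcount 22 = 13 := by
  rw [show (22:ℕ) = 21+1 from rfl, zcount_succ, c22, z21]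
  norm_num
lemma o22 : ocount 22 = 9 := by
  rw [show (22:ℕ) = 21+1 from rfl, ocount_succ, c22, o21]
  norm_num

lemma z23 : zcount 23 = 14 := by
  rw [show (23:ℕ) = 22+1 from rfl, zcount_succ, c23, z22]
  norm_num
lemma o23 : ocount 23 = 9 := by
  rw [show (23:ℕ) = 22+1 from rfl, ocount_succ, c23, o22]
  norm_num

lemma z24 : zcount 24 = 14 := by
  rw [show (24:ℕ) = 23+1 from rfl, zcount_succ, c24, z23]
  norm_num
lemma o24 : ocount 24 = 10 := by
  rw [show (24:ℕ) = 23+1 from rfl, ocount_succ, c24, o23]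
  norm_num

lemma z25 : zcount 25 = 15 := by
  rw [show (25:ℕ) = 24+1 from rfl, zcount_succ, c25, z24]
  norm_num
lemma o25 : ocount 25 = 10 := by
  rw [show (25:ℕ) = 24+1 from rfl, ocount_succ, c25, o24]
  norm_num

lemma z26 : zcount 26 = 15 := by
  rw [show (26:ℕ) = 25+1 from rfl, zcount_succ, c26, z25]
  norm_num
lemma o26 : ocount 26 = 11 := by
  rw [show (26:ℕ) = 25+1 from rfl, ocount_succ, c26, o25]
  norm_num

lemma z27 : zcount 27 = 16 := by
  rw [show (27:ℕ) = 26+1 from rfl, zcount_succ, c27, z26]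
  norm_num
lemma o27 : ocount 27 = 11 := by
  rw [show (27:ℕ) = 26+1 from rfl, ocount_succ, c27, o26]
  norm_num

lemma z28 : zcount 28 = 16 := by
  rw [show (28:ℕ) = 27+1 from rfl, zcount_succ, c28, z27]
  norm_num
lemma o28 : ocount 28 = 12 := by
  rw [show (28:ℕ) = 27+1 from rfl, ocount_succ, c28, o27]
  norm_num

lemma z29 : zcount 29 = 17 := by
  rw [show (29:ℕ) = 28+1 from rfl, zcount_succ, c29, z28]
  norm_num
lemma o29 : ocount 29 = 12 := by
  rw [show (29:ℕ) = 28+1 from rfl, ocount_succ, c29, o28]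
  norm_num


theorem x5_exponent_three_halves_attained :
    ∃ i n p : ℕ, 1 ≤ n ∧ 1 ≤ p ∧ 2 * n = 3 * p ∧
      ∀ j, j + p < n → x5 (i + j) = x5 (i + j + p) := by
  refine ⟨23, 6, 4, by norm_num, by norm_num, by norm_num, ?_⟩
  intro j hj
  have hj2 : j < 2 := by omega
  interval_cases j
  · show x5 23 = x5 27
    unfold x5
    rw [show (23+1:ℕ) = 24 from rfl, show (27+1:ℕ) = 28 from rfl, c24, c28, o24, o28]
    norm_num
  · show x5 24 = x5 28
    unfold x5
    rw [show (24+1:ℕ) = 25 from rfl, show (28+1:ℕ) = 29 from rfl, c25, c29, z25, z29]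
    norm_num
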